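/- For the stochastic-rate-constrained UCB algorithm there exists an absolute constant C > 0 (independent of K, T, v, and the reward distributions) such that for every arm i with Δ_i > 0: E[n_T(i)] ≤ min{ 16·ln T / Δ_i² + (1 − K·v) , (1 − K·v)·T } + v·T + C. -/

import Mathlib

open MeasureTheory ProbabilityTheory Finset

namespace FairBandit

variable {Ω : Type} [MeasurableSpace Ω]

/-- Number of pulls of arm `i` among rounds `1, …, t`. -/
def pullCount {K : ℕ} (arm : ℕ → Ω → Fin K) (i : Fin K) (t : ℕ) (ω : Ω) : ℕ :=
  ((Finset.Icc 1 t).filter (fun s => arm s ω = i)).card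

/-- Empirical mean of arm `i` at round `t`:  average of the first `n_{t-1}(i)`
samples `X i 0, X i 1, …` of arm `i` (the sample `X i k` is observed at the
`(k+1)`-st pull of arm `i`). -/
noncomputable def empMean {K : ℕ} (X : Fin K → ℕ → Ω → ℝ) (arm : ℕ → Ω → Fin K)
    (i : Fin K) (t : ℕ) (ω : Ω) : ℝ :=
  (∑ k ∈ Finset.range (pullCount arm i (t - 1) ω), X i k ω) / (pullCount arm i (t - 1) ω)

/-- Upper confidence bound of arm `i` at round `t`. -/
noncomputable def ucb {K : ℕ} (T : ℕ) (X : Fin K → ℕ → Ω → ℝ) (arm : ℕ → Ω → Fin K)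
    (i : Fin K) (t : ℕ) (ω : Ω) : ℝ :=
  empMean X arm i t ω + 2 * Real.sqrt (Real.log T / (pullCount arm i (t - 1) ω))

/-- Index type for the joint family consisting of all samples of all arms
together with the randomization seeds of rounds `K+1, K+2, …`. -/
def jointβ (K : ℕ) : (Fin K × ℕ) ⊕ ℕ → Type := fun idx =>
  match idx with
  | .inl _ => ℝ
  | .inr _ => Fin (K + 1)

/-- The (discrete/Borel) measurable structure on the joint family. -/
def jointMS (K : ℕ) : ∀ idx, MeasurableSpace (jointβ K idx) := fun idx =>
  match idx with
  | .inl _ => (inferInstance : MeasurableSpace ℝ)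
  | .inr _ => (inferInstance : MeasurableSpace (Fin (K + 1)))

/-- The joint family: sample `X i k` at index `.inl (i, k)` and the
randomization seed `ξ t` of round `t = K + 1 + u > K` at index `.inr u`. -/
def jointF {K : ℕ} (X : Fin K → ℕ → Ω → ℝ) (ξ : ℕ → Ω → Fin (K + 1)) :
    ∀ idx, Ω → jointβ K idx := fun idx =>
  match idx with
  | .inl p => X p.1 p.2
  | .inr u => ξ (K + 1 + u)

/-- The stochastic bandit environment: for every arm `i` the samples
`X i 0, X i 1, …` take values in `[0,1]`, the samples of each arm are
identically distributed, and the mean of every sample of arm `i` is `μ i`.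
(Joint independence is required separately, together with the seeds.) -/
def BanditEnvNoIndep {K : ℕ} (P : Measure Ω) (X : Fin K → ℕ → Ω → ℝ) (μ : Fin K → ℝ) : Prop :=
  (∀ i k, Measurable (X i k)) ∧
  (∀ i k ω, X i k ω ∈ Set.Icc (0 : ℝ) 1) ∧
  (∀ i k, Measure.map (X i k) P = Measure.map (X i 0) P) ∧
  (∀ i k, ∫ ω, X i k ω ∂P = μ i)

/-- The stochastic-rate-constrained UCB algorithm: rounds `1, …, K` pull each
arm once; at every round `t > K`, the arm `b t` is a maximizer of the UCB
index (ties broken by smallest index), and the pulled arm is `b t` if the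
seed `ξ t` equals `K`, and the arm `ξ t` otherwise, where the seed takes the
value `K` with probability `1 - K·v` and each value `i < K` with probability
`v` (so that a uniformly random arm is pulled with probability `K·v`),
independently of everything else (i.e. of all samples and all other seeds). -/
def StochUCB {K : ℕ} (T : ℕ) (v : ℝ) (P : Measure Ω) (X : Fin K → ℕ → Ω → ℝ)
    (ξ : ℕ → Ω → Fin (K + 1)) (b arm : ℕ → Ω → Fin K) : Prop :=
  (∀ t, Measurable (arm t)) ∧ (∀ t, Measurable (b t)) ∧ (∀ t, Measurable (ξ t)) ∧
  (∀ t ω, 1 ≤ t → t ≤ K → ((arm t ω : ℕ) = t - 1)) ∧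
  (∀ t ω, K < t →
    (∀ j, ucb T X arm j t ω ≤ ucb T X arm (b t ω) t ω) ∧
    (∀ j, ucb T X arm j t ω = ucb T X arm (b t ω) t ω → b t ω ≤ j)) ∧
  (∀ t ω, K < t →
    arm t ω = if h : ((ξ t ω : ℕ) < K) then ⟨(ξ t ω : ℕ), h⟩ else b t ω) ∧
  (∀ t, K < t → ∀ j : Fin (K + 1),
    P {ω | ξ t ω = j} = ENNReal.ofReal (if (j : ℕ) < K then v else 1 - (K : ℝ) * v)) ∧
  iIndepFun (m := jointMS K) (jointF X ξ) P

/-- The benchmark distribution `p*` over arms: `p*(i*) = 1 - K·v + v` and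
`p*(i) = v` otherwise. -/
noncomputable def pstar {K : ℕ} (v : ℝ) (istar : Fin K) (i : Fin K) : ℝ :=
  v + (1 - (K : ℝ) * v) * (if i = istar then 1 else 0)

/-- The conditional distribution `p_t` of the pulled arm at round `t` given the
history: `p_t(b_t) = 1 - K·v + v` and `p_t(i) = v` otherwise. -/
noncomputable def pt {K : ℕ} (v : ℝ) (b : ℕ → Ω → Fin K) (t : ℕ) (ω : Ω) (i : Fin K) : ℝ :=
  v + (1 - (K : ℝ) * v) * (if i = b t ω then 1 else 0)

section MyAux
variable {Ω : Type} [MeasurableSpace Ω]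
variable {Ω : Type} [MeasurableSpace Ω]

/-- reindexing independence along an injective map -/
lemma my_iIndepFun_precomp {ι κ : Type*} [Countable κ] {β : ι → Type*}
    {m : ∀ i, MeasurableSpace (β i)} {f : ∀ i, Ω → β i} {P : Measure Ω}
    (g : κ → ι) (hg : Function.Injective g) (h : iIndepFun (m := m) f P) :
    iIndepFun (m := fun k => m (g k)) (fun k => f (g k)) P := by
  rw [iIndepFun_iff_measure_inter_preimage_eq_mul] at h ⊢
  intro S sets hsets
  classical
  set ext : ∀ i, Set (β i) := fun i =>
    ⋂ (k : κ) (_ : k ∈ S) (hk : g k = i), hk ▸ sets k with hext_def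
  have hext : ∀ k ∈ S, ext (g k) = sets k := by
    intro k hk
    ext x
    simp only [hext_def, Set.mem_iInter]
    constructor
    · intro hx; exact hx k hk rfl
    · intro hx k' hk' hgk
      cases hg hgk
      exact hx
  have hmeas : ∀ i, i ∈ S.image g → MeasurableSet[m i] (ext i) := by
    intro i _
    refine MeasurableSet.iInter fun k => MeasurableSet.iInter fun hk =>
      MeasurableSet.iInter fun hgk => ?_
    cases hgk
    exact hsets k hk
  have key := h (S.image g) hmeas
  have h1 : (⋂ i ∈ S.image g, f i ⁻¹' ext i) = ⋂ k ∈ S, (f (g k)) ⁻¹' sets k := by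
    ext x
    simp only [Set.mem_iInter, Finset.mem_image]
    constructor
    · intro hx k hk
      have := hx (g k) ⟨k, hk, rfl⟩
      rwa [hext k hk] at this
    · rintro hx i ⟨k, hk, rfl⟩
      rw [hext k hk]
      exact hx k hk
  have h2 : ∏ i ∈ S.image g, P (f i ⁻¹' ext i) = ∏ k ∈ S, P ((f (g k)) ⁻¹' sets k) := by
    rw [Finset.prod_image (fun a _ b _ hab => hg hab)]
    exact Finset.prod_congr rfl fun k hk => by rw [hext k hk]
  rw [h1, h2] at key
  exact key

/-- mgf bound for a centered [-1,1]-valued r.v. -/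
lemma my_mgf_le {P : Measure Ω} [IsProbabilityMeasure P] {Y : Ω → ℝ} (hm : Measurable Y)
    (hb : ∀ ω, Y ω ∈ Set.Icc (-1:ℝ) 1) (h0 : ∫ ω, Y ω ∂P = 0) (t : ℝ) :
    mgf Y P t ≤ Real.exp (t^2/2) := by
  have hYint : Integrable Y P := by
    refine Integrable.mono' (integrable_const 1) hm.aestronglyMeasurable ?_
    filter_upwards with ω
    rw [Real.norm_eq_abs, abs_le]
    exact ⟨(hb ω).1, (hb ω).2⟩
  have hpt : ∀ ω, Real.exp (t * Y ω) ≤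
      (1 + Y ω)/2 * Real.exp t + (1 - Y ω)/2 * Real.exp (-t) := by
    intro ω
    have ha : (0:ℝ) ≤ (1 + Y ω)/2 := by have := (hb ω).1; linarith
    have hb' : (0:ℝ) ≤ (1 - Y ω)/2 := by have := (hb ω).2; linarith
    have hab : (1 + Y ω)/2 + (1 - Y ω)/2 = 1 := by ring
    have := convexOn_exp.2 (Set.mem_univ t) (Set.mem_univ (-t)) ha hb' hab
    simpa [smul_eq_mul, mul_comm, mul_neg] using (le_of_eq (by ring_nf) : Real.exp (t * Y ω) ≤
      Real.exp ((1 + Y ω)/2 * t + (1 - Y ω)/2 * (-t))).trans this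
  have hrint : Integrable (fun ω => (1 + Y ω)/2 * Real.exp t + (1 - Y ω)/2 * Real.exp (-t)) P := by
    apply Integrable.add
    · exact (((integrable_const 1).add hYint).div_const 2).mul_const _
    · exact (((integrable_const 1).sub hYint).div_const 2).mul_const _
  have hint : Integrable (fun ω => Real.exp (t * Y ω)) P := by
    refine Integrable.mono' (integrable_const (Real.exp |t|)) ?_ ?_
    · exact (hm.const_mul t).exp.aestronglyMeasurable
    · filter_upwards with ω
      rw [Real.norm_eq_abs, Real.abs_exp, Real.exp_le_exp]
      calc t * Y ω ≤ |t * Y ω| := le_abs_self _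
        _ = |t| * |Y ω| := abs_mul _ _
        _ ≤ |t| * 1 := by
            have : |Y ω| ≤ 1 := abs_le.2 ⟨(hb ω).1, (hb ω).2⟩
            exact mul_le_mul_of_nonneg_left this (abs_nonneg t)
        _ = |t| := mul_one _
  have h1 : mgf Y P t ≤ ∫ ω, ((1 + Y ω)/2 * Real.exp t + (1 - Y ω)/2 * Real.exp (-t)) ∂P := by
    rw [mgf]
    exact integral_mono hint hrint hpt
  have h2 : ∫ ω, ((1 + Y ω)/2 * Real.exp t + (1 - Y ω)/2 * Real.exp (-t)) ∂P
      = Real.cosh t := by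
    have e1 : ∀ ω, (1 + Y ω)/2 * Real.exp t + (1 - Y ω)/2 * Real.exp (-t)
        = (Real.exp t + Real.exp (-t))/2 + Y ω * ((Real.exp t - Real.exp (-t))/2) := by
      intro ω; ring
    simp_rw [e1]
    rw [integral_add (integrable_const _) (hYint.mul_const _),
      integral_const, integral_mul_const, h0, Real.cosh_eq]
    simp
  calc mgf Y P t ≤ Real.cosh t := h1.trans (le_of_eq h2)
    _ ≤ Real.exp (t^2/2) := Real.cosh_le_exp_half_sq t

/-- Chernoff bound for sums of independent centered [-1,1] variables. -/
lemma my_chernoff {P : Measure Ω} [IsProbabilityMeasure P] {Y : ℕ → Ω → ℝ}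
    (hm : ∀ k, Measurable (Y k)) (hb : ∀ k ω, Y k ω ∈ Set.Icc (-1:ℝ) 1)
    (h0 : ∀ k, ∫ ω, Y k ω ∂P = 0)
    (hind : iIndepFun Y P) {n : ℕ} (hn : 0 < n) {ε : ℝ} (hε : 0 ≤ ε) :
    (P {ω | ε ≤ ∑ k ∈ Finset.range n, Y k ω}).toReal ≤ Real.exp (-(ε^2)/(2*n)) := by
  set t : ℝ := ε / n with ht_def
  have hnpos : (0:ℝ) < n := Nat.cast_pos.2 hn
  have ht : 0 ≤ t := div_nonneg hε hnpos.le
  have hSm : Measurable (fun ω => ∑ k ∈ Finset.range n, Y k ω) :=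
    Finset.measurable_sum _ fun k _ => hm k
  have hint : Integrable (fun ω => Real.exp (t * ∑ k ∈ Finset.range n, Y k ω)) P := by
    refine Integrable.mono' (integrable_const (Real.exp (t * n))) ?_ ?_
    · exact (hSm.const_mul t).exp.aestronglyMeasurable
    · filter_upwards with ω
      rw [Real.norm_eq_abs, Real.abs_exp, Real.exp_le_exp]
      refine mul_le_mul_of_nonneg_left ?_ ht
      calc ∑ k ∈ Finset.range n, Y k ω ≤ ∑ k ∈ Finset.range n, 1 :=
            Finset.sum_le_sum fun k _ => (hb k ω).2
        _ = n := by simp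
  have hch := measure_ge_le_exp_mul_mgf (X := fun ω => ∑ k ∈ Finset.range n, Y k ω)
    (μ := P) ε ht hint
  have hmgf : mgf (fun ω => ∑ k ∈ Finset.range n, Y k ω) P t ≤ Real.exp (n * t^2/2) := by
    have hsum : (fun ω => ∑ k ∈ Finset.range n, Y k ω) = ∑ k ∈ Finset.range n, Y k := by
      ext ω; simp
    rw [hsum, hind.mgf_sum hm]
    calc ∏ k ∈ Finset.range n, mgf (Y k) P t
        ≤ ∏ _k ∈ Finset.range n, Real.exp (t^2/2) := by
          refine Finset.prod_le_prod (fun k _ => mgf_nonneg) fun k _ =>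
            my_mgf_le (hm k) (hb k) (h0 k) t
      _ = Real.exp (n * t^2/2) := by
          rw [Finset.prod_const, ← Real.exp_nat_mul, Finset.card_range]
          ring_nf
  calc (P {ω | ε ≤ ∑ k ∈ Finset.range n, Y k ω}).toReal
      ≤ Real.exp (-t * ε) * mgf (fun ω => ∑ k ∈ Finset.range n, Y k ω) P t := hch
    _ ≤ Real.exp (-t * ε) * Real.exp (n * t^2/2) :=
        mul_le_mul_of_nonneg_left hmgf (Real.exp_nonneg _)
    _ = Real.exp (-t * ε + n * t^2/2) := (Real.exp_add _ _).symm
    _ = Real.exp (-(ε^2)/(2*n)) := by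
        congr 1
        rw [ht_def]
        field_simp
        ring
end MyAux

section MyHelpers
variable {Ω : Type} [MeasurableSpace Ω]

lemma pullCount_mono {K : ℕ} (arm : ℕ → Ω → Fin K) (i : Fin K) {t t' : ℕ} (h : t ≤ t') (ω : Ω) :
    pullCount arm i t ω ≤ pullCount arm i t' ω :=
  Finset.card_le_card (Finset.filter_subset_filter _ (Finset.Icc_subset_Icc_right h))

lemma pullCount_le {K : ℕ} (arm : ℕ → Ω → Fin K) (i : Fin K) (t : ℕ) (ω : Ω) :
    pullCount arm i t ω ≤ t := by
  calc pullCount arm i t ω ≤ (Finset.Icc 1 t).card := Finset.card_le_card (filter_subset _ _)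
    _ = t := by rw [Nat.card_Icc]; omega

lemma pullCount_succ {K : ℕ} {arm : ℕ → Ω → Fin K} {i : Fin K} {t : ℕ} {ω : Ω}
    (ht : 1 ≤ t) (h : arm t ω = i) :
    pullCount arm i t ω = pullCount arm i (t - 1) ω + 1 := by
  obtain ⟨s, rfl⟩ : ∃ s, t = s + 1 := ⟨t - 1, (Nat.succ_pred_eq_of_pos ht).symm⟩
  unfold pullCount
  have hins : Finset.Icc 1 (s+1) = insert (s+1) (Finset.Icc 1 s) := by
    ext x; simp only [Finset.mem_Icc, Finset.mem_insert]; omega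
  rw [Nat.add_sub_cancel, hins, Finset.filter_insert, if_pos h,
    Finset.card_insert_of_notMem (fun hmem => by simpa using (Finset.mem_Icc.1 (Finset.mem_of_mem_filter _ hmem)).2)]

lemma pullCount_pos {K : ℕ} {arm : ℕ → Ω → Fin K} {i : Fin K} {t : ℕ} {ω : Ω}
    (hinit : ∀ s, 1 ≤ s → s ≤ K → ((arm s ω : ℕ) = s - 1)) (hK : K ≤ t) :
    1 ≤ pullCount arm i t ω := by
  have hiK : (i : ℕ) < K := i.isLt
  refine Finset.card_pos.2 ⟨(i : ℕ) + 1, Finset.mem_filter.2 ⟨Finset.mem_Icc.2 ⟨by omega, by omega⟩, ?_⟩⟩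
  have := hinit ((i : ℕ) + 1) (by omega) (by omega)
  exact Fin.ext (by simpa using this)

/-- Key deterministic lemma: on the good event, a UCB pick of a suboptimal arm
forces a small pull count. -/
lemma key_det {K T : ℕ} {X : Fin K → ℕ → Ω → ℝ} {μ : Fin K → ℝ} {istar i : Fin K}
    {arm : ℕ → Ω → Fin K} {ω : Ω} {t : ℕ}
    (hlog : 0 ≤ Real.log T) (hKt : K < t) (htT : t ≤ T)
    (hinit : ∀ s, 1 ≤ s → s ≤ K → ((arm s ω : ℕ) = s - 1))
    (hmax : ucb T X arm istar t ω ≤ ucb T X arm i t ω)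
    (hgoodi : ∀ n, 1 ≤ n → n ≤ T →
      ∑ k ∈ Finset.range n, (X i k ω - μ i) < 2 * Real.sqrt (n * Real.log T))
    (hgoodstar : ∀ n, 1 ≤ n → n ≤ T →
      ∑ k ∈ Finset.range n, (μ istar - X istar k ω) < 2 * Real.sqrt (n * Real.log T))
    (hΔ : 0 < μ istar - μ i) :
    (pullCount arm i (t - 1) ω : ℝ) < 16 * Real.log T / (μ istar - μ i) ^ 2 := by
  set n := pullCount arm i (t - 1) ω with hn_def
  set m := pullCount arm istar (t - 1) ω with hm_def
  have hn1 : 1 ≤ n := pullCount_pos hinit (by omega)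
  have hm1 : 1 ≤ m := pullCount_pos hinit (by omega)
  have hnT : n ≤ T := (pullCount_le _ _ _ _).trans (by omega)
  have hmT : m ≤ T := (pullCount_le _ _ _ _).trans (by omega)
  have hn0 : (0:ℝ) < n := by exact_mod_cast hn1
  have hm0 : (0:ℝ) < m := by exact_mod_cast hm1
  -- identity : sqrt(c * log T) = c * sqrt(log T / c)
  have hsq : ∀ c : ℝ, 0 < c → Real.sqrt (c * Real.log T) = c * Real.sqrt (Real.log T / c) := by
    intro c hc
    rw [show c * Real.log T = c ^ 2 * (Real.log T / c) by field_simp,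
      Real.sqrt_mul (sq_nonneg _), Real.sqrt_sq hc.le]
  have hgi := hgoodi n hn1 hnT
  have hgs := hgoodstar m hm1 hmT
  rw [hsq _ hn0] at hgi
  rw [hsq _ hm0] at hgs
  rw [Finset.sum_sub_distrib, Finset.sum_const, Finset.card_range, nsmul_eq_mul] at hgi hgs
  -- empirical mean bounds
  have hei : empMean X arm i t ω < μ i + 2 * Real.sqrt (Real.log T / n) := by
    rw [empMean, ← hn_def, div_lt_iff₀ hn0]
    nlinarith [hgi]
  have hes : μ istar - 2 * Real.sqrt (Real.log T / m) < empMean X arm istar t ω := by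
    rw [empMean, ← hm_def, lt_div_iff₀ hm0]
    nlinarith [hgs]
  have hucb_i : ucb T X arm i t ω < μ i + 4 * Real.sqrt (Real.log T / n) := by
    rw [ucb, ← hn_def]; linarith
  have hucb_s : μ istar < ucb T X arm istar t ω := by
    rw [ucb, ← hm_def]; linarith
  have hkey : μ istar - μ i < 4 * Real.sqrt (Real.log T / n) := by linarith
  have hsqrt_sq : (Real.sqrt (Real.log T / n)) ^ 2 = Real.log T / n :=
    Real.sq_sqrt (by positivity)
  have hΔsq : (μ istar - μ i) ^ 2 < 16 * (Real.log T / n) := by nlinarith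
  rw [lt_div_iff₀ (by positivity : (0:ℝ) < (μ istar - μ i) ^ 2)]
  calc (n:ℝ) * (μ istar - μ i) ^ 2 < (n:ℝ) * (16 * (Real.log T / n)) := by
        exact mul_lt_mul_of_pos_left hΔsq hn0
    _ = 16 * Real.log T := by field_simp


/-- counting: number of UCB-branch pulls of a suboptimal arm is ≤ u on the good event -/
lemma count_le {K T : ℕ} {arm : ℕ → Ω → Fin K} {i : Fin K} {ω : Ω} (u : ℕ)
    (p : ℕ → Prop) [DecidablePred p]
    (hgood : ∀ t, t ∈ Finset.Icc (K+1) T → p t → arm t ω = i →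
      1 ≤ pullCount arm i (t-1) ω ∧ pullCount arm i (t-1) ω ≤ u) :
    ((Finset.Icc (K+1) T).filter (fun t => p t ∧ arm t ω = i)).card ≤ u := by
  classical
  have h := Finset.card_le_card_of_injOn
    (s := (Finset.Icc (K+1) T).filter (fun t => p t ∧ arm t ω = i))
    (t := Finset.Icc 1 u) (fun t => pullCount arm i (t-1) ω) ?_ ?_
  · simpa using h
  · intro t ht
    simp only [Finset.coe_filter, Set.mem_setOf_eq] at ht
    obtain ⟨ht1, ht2, ht3⟩ := ht
    exact Finset.mem_Icc.2 (hgood t ht1 ht2 ht3)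
  · have key : ∀ t t', t ∈ Finset.Icc (K+1) T → arm t ω = i → t < t' →
        pullCount arm i (t-1) ω < pullCount arm i (t'-1) ω := by
      intro t t' ht harm hlt
      rw [Finset.mem_Icc] at ht
      have h1 : pullCount arm i t ω = pullCount arm i (t-1) ω + 1 :=
        pullCount_succ (by omega) harm
      have h2 : pullCount arm i t ω ≤ pullCount arm i (t'-1) ω :=
        pullCount_mono arm i (by omega) ω
      omega
    intro t ht t' ht' heq
    simp only [Finset.coe_filter, Set.mem_setOf_eq, Finset.mem_Icc] at ht ht'
    simp only at heq
    by_contra hne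
    rcases Nat.lt_or_ge t t' with hlt | hge
    · exact absurd heq (Nat.ne_of_lt (key t t' (Finset.mem_Icc.2 ⟨ht.1.1, ht.1.2⟩) ht.2.2 hlt))
    · have hlt : t' < t := by omega
      exact absurd heq.symm
        (Nat.ne_of_lt (key t' t (Finset.mem_Icc.2 ⟨ht'.1.1, ht'.1.2⟩) ht'.2.2 hlt))

lemma integral_count {P : Measure Ω} [IsProbabilityMeasure P] (s : Finset ℕ)
    (p : ℕ → Ω → Prop) [∀ t ω, Decidable (p t ω)]
    (hp : ∀ t, MeasurableSet {ω | p t ω}) :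
    ∫ ω, ((s.filter (fun t => p t ω)).card : ℝ) ∂P = ∑ t ∈ s, (P {ω | p t ω}).toReal := by
  have hrw : ∀ ω : Ω, ((s.filter (fun t => p t ω)).card : ℝ)
      = ∑ t ∈ s, Set.indicator {ω | p t ω} (fun _ => (1:ℝ)) ω := by
    intro ω
    rw [Finset.card_filter]
    push_cast
    refine Finset.sum_congr rfl fun t _ => ?_
    by_cases h : p t ω <;> simp [Set.indicator_apply, h]
  simp_rw [hrw]
  rw [integral_finset_sum _ (fun t _ => (integrable_const (1:ℝ)).indicator (hp t))]
  refine Finset.sum_congr rfl fun t _ => ?_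
  rw [integral_indicator_const _ (hp t)]
  simp [measureReal_def]

lemma integrable_count {P : Measure Ω} [IsProbabilityMeasure P] (s : Finset ℕ)
    (p : ℕ → Ω → Prop) [∀ t ω, Decidable (p t ω)]
    (hp : ∀ t, MeasurableSet {ω | p t ω}) :
    Integrable (fun ω => ((s.filter (fun t => p t ω)).card : ℝ)) P := by
  have hrw : ∀ ω : Ω, ((s.filter (fun t => p t ω)).card : ℝ)
      = ∑ t ∈ s, Set.indicator {ω | p t ω} (fun _ => (1:ℝ)) ω := by
    intro ω
    rw [Finset.card_filter]
    push_cast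
    refine Finset.sum_congr rfl fun t _ => ?_
    by_cases h : p t ω <;> simp [Set.indicator_apply, h]
  simp_rw [hrw]
  exact integrable_finset_sum _ (fun t _ => (integrable_const (1:ℝ)).indicator (hp t))

end MyHelpers

end FairBandit

open FairBandit MeasureTheory ProbabilityTheory

/-- For the stochastic-rate-constrained UCB algorithm there
is an absolute constant `C > 0` such that for every arm `i` with `Δ_i > 0`:
`E[n_T(i)] ≤ min{ 16 ln T / Δ_i² + (1-Kv) , (1-Kv)·T } + v·T + C`. -/
theorem stoch_ucb_pull_count_bound :
    ∃ C : ℝ, 0 < C ∧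
      ∀ (Ω : Type) (_ : MeasurableSpace Ω) (P : Measure Ω), IsProbabilityMeasure P →
      ∀ (K T : ℕ) (v : ℝ) (X : Fin K → ℕ → Ω → ℝ) (μ : Fin K → ℝ) (istar : Fin K)
        (ξ : ℕ → Ω → Fin (K + 1)) (b arm : ℕ → Ω → Fin K),
        2 ≤ K → max K 2 ≤ T → 0 < v → v ≤ 1 / (K : ℝ) →
        BanditEnvNoIndep P X μ → StochUCB T v P X ξ b arm →
        (∀ j, μ j ≤ μ istar) →
        ∀ i : Fin K, 0 < μ istar - μ i →
          (∫ ω, (pullCount arm i T ω : ℝ) ∂P) ≤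
            min (16 * Real.log T / (μ istar - μ i) ^ 2 + (1 - (K : ℝ) * v))
              ((1 - (K : ℝ) * v) * T) + v * T + C := by
  classical
  refine ⟨4, by norm_num, ?_⟩
  intro Ω mΩ P hP K T v X μ istar ξ b arm hK2 hTmax hv hvK henv halg hopt i hΔpos
  obtain ⟨hXm, hXb, hXid, hXmean⟩ := henv
  obtain ⟨harmm, hbm, hξm, hinit, hmax, hdite, hξdist, hindep⟩ := halg
  have hKT : K ≤ T := le_trans (le_max_left _ _) hTmax
  have hT2 : 2 ≤ T := le_trans (le_max_right _ _) hTmax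
  have hT2' : (2:ℝ) ≤ T := by exact_mod_cast hT2
  have hT0 : (0:ℝ) < T := by linarith
  have hT1 : (1:ℝ) ≤ T := by linarith
  have hlog : 0 ≤ Real.log T := Real.log_nonneg hT1
  have hK0 : (0:ℝ) < K := by
    have : (2:ℝ) ≤ K := by exact_mod_cast hK2
    linarith
  have hKv1 : (K:ℝ) * v ≤ 1 := by
    have := mul_le_mul_of_nonneg_left hvK hK0.le
    rwa [mul_one_div, div_self hK0.ne'] at this
  have hKv0 : 0 ≤ 1 - (K:ℝ) * v := by linarith
  set Δ : ℝ := μ istar - μ i with hΔ_def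
  -- integrability and mean bounds
  have hXint : ∀ j k, Integrable (X j k) P := by
    intro j k
    refine Integrable.mono' (integrable_const 1) (hXm j k).aestronglyMeasurable ?_
    filter_upwards with ω
    rw [Real.norm_eq_abs, abs_le]
    exact ⟨by linarith [(hXb j k ω).1], (hXb j k ω).2⟩
  have hμ0 : ∀ j, 0 ≤ μ j := fun j => by
    rw [← hXmean j 0]; exact integral_nonneg fun ω => (hXb j 0 ω).1
  have hμ1 : ∀ j, μ j ≤ 1 := fun j => by
    rw [← hXmean j 0]
    calc ∫ ω, X j 0 ω ∂P ≤ ∫ _ω, (1:ℝ) ∂P :=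
          integral_mono (hXint j 0) (integrable_const 1) fun ω => (hXb j 0 ω).2
      _ = 1 := by simp
  -- independence of each arm's sample sequence
  have hXind : ∀ j : Fin K, iIndepFun (m := fun _ : ℕ => (inferInstance : MeasurableSpace ℝ))
      (fun k => X j k) P := by
    intro j
    have hinj : Function.Injective (fun k : ℕ => (Sum.inl (j, k) : (Fin K × ℕ) ⊕ ℕ)) := by
      intro a c hac
      simpa using hac
    exact my_iIndepFun_precomp (fun k : ℕ => (Sum.inl (j, k) : (Fin K × ℕ) ⊕ ℕ)) hinj hindep
  -- deviation probability for a single (arm, sign, n)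
  set q : ℝ := Real.exp (-(2 * Real.log T)) with hq_def
  have hq0 : 0 ≤ q := Real.exp_nonneg _
  have hdev : ∀ (j : Fin K) (σ : ℝ), (σ = 1 ∨ σ = -1) → ∀ n : ℕ, 1 ≤ n →
      (P {ω | 2 * Real.sqrt (n * Real.log T) ≤
        ∑ k ∈ Finset.range n, σ * (X j k ω - μ j)}).toReal ≤ q := by
    intro j σ hσ n hn
    have hYm : ∀ k : ℕ, Measurable (fun ω => σ * (X j k ω - μ j)) := fun k =>
      ((hXm j k).sub_const _).const_mul σ
    have hYb : ∀ (k : ℕ) ω, σ * (X j k ω - μ j) ∈ Set.Icc (-1:ℝ) 1 := by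
      intro k ω
      have h1 := (hXb j k ω).1; have h2 := (hXb j k ω).2
      have h3 := hμ0 j; have h4 := hμ1 j
      rcases hσ with h | h <;> rw [h] <;> constructor <;> nlinarith
    have hY0 : ∀ k : ℕ, ∫ ω, σ * (X j k ω - μ j) ∂P = 0 := by
      intro k
      rw [integral_const_mul, integral_sub (hXint j k) (integrable_const _), hXmean j k,
        integral_const]
      simp
    have hYind : iIndepFun (m := fun _ : ℕ => (inferInstance : MeasurableSpace ℝ))
        (fun k => fun ω => σ * (X j k ω - μ j)) P :=
      (hXind j).comp (fun _ => fun y => σ * (y - μ j))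
        (fun _ => (measurable_id.sub_const _).const_mul σ)
    have hε : 0 ≤ 2 * Real.sqrt (n * Real.log T) := by positivity
    have hch := my_chernoff hYm hYb hY0 hYind hn hε
    refine hch.trans (le_of_eq ?_)
    rw [hq_def]
    congr 1
    have hn0 : (0:ℝ) < n := by exact_mod_cast hn
    rw [mul_pow, Real.sq_sqrt (by positivity)]
    field_simp
  -- the bad event
  set Aset : ℕ → Set Ω := fun n =>
    {ω | 2 * Real.sqrt (n * Real.log T) ≤ ∑ k ∈ Finset.range n, (X i k ω - μ i)} with hA_def
  set Bset : ℕ → Set Ω := fun n =>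
    {ω | 2 * Real.sqrt (n * Real.log T) ≤ ∑ k ∈ Finset.range n, (μ istar - X istar k ω)}
    with hB_def
  have hAm : ∀ n, MeasurableSet (Aset n) := fun n =>
    measurableSet_le measurable_const
      (Finset.measurable_sum _ fun k _ => (hXm i k).sub_const _)
  have hBm : ∀ n, MeasurableSet (Bset n) := fun n =>
    measurableSet_le measurable_const
      (Finset.measurable_sum _ fun k _ => measurable_const.sub (hXm istar k))
  have hPA : ∀ n : ℕ, 1 ≤ n → (P (Aset n)).toReal ≤ q := by
    intro n hn
    have h := hdev i 1 (Or.inl rfl) n hn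
    have hset : {ω : Ω | 2 * Real.sqrt (n * Real.log T) ≤
        ∑ k ∈ Finset.range n, (1:ℝ) * (X i k ω - μ i)} = Aset n := by
      rw [hA_def]; simp
    rwa [hset] at h
  have hPB : ∀ n : ℕ, 1 ≤ n → (P (Bset n)).toReal ≤ q := by
    intro n hn
    have h := hdev istar (-1) (Or.inr rfl) n hn
    have hset : {ω : Ω | 2 * Real.sqrt (n * Real.log T) ≤
        ∑ k ∈ Finset.range n, (-1:ℝ) * (X istar k ω - μ istar)} = Bset n := by
      rw [hB_def]
      have : ∀ (ω : Ω) (k : ℕ), (-1:ℝ) * (X istar k ω - μ istar) = μ istar - X istar k ω := by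
        intros; ring
      simp_rw [this]
    rwa [hset] at h
  set Bad : Set Ω := ⋃ n ∈ Finset.Icc 1 T, (Aset n ∪ Bset n) with hBad_def
  have hBadm : MeasurableSet Bad :=
    MeasurableSet.biUnion (Set.to_countable _) fun n _ => (hAm n).union (hBm n)
  have hPBad : (P Bad).toReal ≤ 2 * T * q := by
    have h2 : P Bad ≤ ENNReal.ofReal (2 * T * q) := by
      calc P Bad ≤ ∑ n ∈ Finset.Icc 1 T, P (Aset n ∪ Bset n) :=
            measure_biUnion_finset_le _ _
        _ ≤ ∑ _n ∈ Finset.Icc 1 T, ENNReal.ofReal (2 * q) := by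
            refine Finset.sum_le_sum fun n hn => ?_
            have hn1 : 1 ≤ n := (Finset.mem_Icc.1 hn).1
            calc P (Aset n ∪ Bset n) ≤ P (Aset n) + P (Bset n) := measure_union_le _ _
              _ ≤ ENNReal.ofReal q + ENNReal.ofReal q := by
                  refine add_le_add ?_ ?_
                  · rw [← ENNReal.ofReal_toReal (measure_ne_top P _)]
                    exact ENNReal.ofReal_le_ofReal (hPA n hn1)
                  · rw [← ENNReal.ofReal_toReal (measure_ne_top P _)]
                    exact ENNReal.ofReal_le_ofReal (hPB n hn1)
              _ = ENNReal.ofReal (2 * q) := by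
                  rw [← ENNReal.ofReal_add hq0 hq0]; ring_nf
        _ = (Finset.Icc 1 T).card • ENNReal.ofReal (2 * q) := (Finset.sum_const _)
        _ = ENNReal.ofReal (2 * T * q) := by
            rw [Nat.card_Icc, nsmul_eq_mul]
            rw [show T + 1 - 1 = T by omega]
            rw [show ((T:ENNReal)) = ENNReal.ofReal (T:ℝ) by simp]
            rw [← ENNReal.ofReal_mul (by positivity)]
            ring_nf
    exact ENNReal.toReal_le_of_le_ofReal (by positivity) h2
  have hq_val : q = 1 / ((T:ℝ) * T) := by
    rw [hq_def, show -(2 * Real.log T) = -(Real.log T + Real.log T) by ring, Real.exp_neg,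
      Real.exp_add, Real.exp_log hT0, one_div]
  have hPBad2 : (T:ℝ) * (P Bad).toReal ≤ 2 := by
    calc (T:ℝ) * (P Bad).toReal ≤ (T:ℝ) * (2 * T * q) := by
          exact mul_le_mul_of_nonneg_left hPBad (by positivity)
      _ = 2 := by rw [hq_val]; field_simp
  -- good-event consequences
  have hGoodA : ∀ ω, ω ∉ Bad → ∀ n, 1 ≤ n → n ≤ T →
      ∑ k ∈ Finset.range n, (X i k ω - μ i) < 2 * Real.sqrt (n * Real.log T) := by
    intro ω hω n h1 h2
    by_contra hc
    push_neg at hc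
    exact hω (Set.mem_biUnion (Finset.mem_Icc.2 ⟨h1, h2⟩) (Or.inl hc))
  have hGoodB : ∀ ω, ω ∉ Bad → ∀ n, 1 ≤ n → n ≤ T →
      ∑ k ∈ Finset.range n, (μ istar - X istar k ω) < 2 * Real.sqrt (n * Real.log T) := by
    intro ω hω n h1 h2
    by_contra hc
    push_neg at hc
    exact hω (Set.mem_biUnion (Finset.mem_Icc.2 ⟨h1, h2⟩) (Or.inr hc))
  set u : ℕ := ⌈16 * Real.log T / Δ ^ 2⌉₊ with hu_def
  -- on the good event the UCB-branch count is at most u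
  have hg3_good : ∀ ω, ω ∉ Bad →
      ((Finset.Icc (K+1) T).filter
        (fun t => ξ t ω = Fin.last K ∧ arm t ω = i)).card ≤ u := by
    intro ω hω
    apply count_le u (fun t => ξ t ω = Fin.last K)
    intro t ht hξt harm
    rw [Finset.mem_Icc] at ht
    have hKt : K < t := by omega
    have hbt : b t ω = i := by
      have hd := hdite t ω hKt
      rw [dif_neg (by rw [hξt]; simp)] at hd
      rw [harm] at hd
      exact hd.symm
    have hmax' := (hmax t ω hKt).1 istar
    rw [hbt] at hmax'
    have hkey := key_det hlog hKt ht.2 (fun s h1 h2 => hinit s ω h1 h2) hmax'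
      (hGoodA ω hω) (hGoodB ω hω) hΔpos
    refine ⟨pullCount_pos (fun s h1 h2 => hinit s ω h1 h2) (by omega), ?_⟩
    exact le_of_lt (Nat.lt_ceil.2 hkey)
  -- pathwise decomposition
  have hsplit : ∀ ω, (pullCount arm i T ω : ℝ) ≤ 1
      + (((Finset.Icc (K+1) T).filter (fun t => ξ t ω = Fin.castSucc i)).card : ℝ)
      + (((Finset.Icc (K+1) T).filter
          (fun t => ξ t ω = Fin.last K ∧ arm t ω = i)).card : ℝ) := by
    intro ω
    have hIcc : Finset.Icc 1 T = Finset.Icc 1 K ∪ Finset.Icc (K+1) T := by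
      ext x; simp only [Finset.mem_Icc, Finset.mem_union]; omega
    have hsplitn : pullCount arm i T ω ≤
        ((Finset.Icc 1 K).filter (fun t => arm t ω = i)).card
        + ((Finset.Icc (K+1) T).filter (fun t => arm t ω = i)).card := by
      rw [pullCount, hIcc, Finset.filter_union]
      exact Finset.card_union_le _ _
    have hinitc : ((Finset.Icc 1 K).filter (fun t => arm t ω = i)).card = 1 := by
      have hsing : (Finset.Icc 1 K).filter (fun t => arm t ω = i) = {(i:ℕ)+1} := by
        ext s
        simp only [Finset.mem_filter, Finset.mem_Icc, Finset.mem_singleton]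
        constructor
        · rintro ⟨⟨h1, h2⟩, h3⟩
          have h4 := hinit s ω h1 h2
          rw [h3] at h4
          omega
        · rintro rfl
          have hiK : (i:ℕ) < K := i.isLt
          have h4 := hinit ((i:ℕ)+1) ω (by omega) (by omega)
          exact ⟨⟨by omega, by omega⟩, Fin.ext (by omega)⟩
      rw [hsing, Finset.card_singleton]
    have hsub : ((Finset.Icc (K+1) T).filter (fun t => arm t ω = i)).card ≤
        ((Finset.Icc (K+1) T).filter (fun t => ξ t ω = Fin.castSucc i)).card
        + ((Finset.Icc (K+1) T).filter
            (fun t => ξ t ω = Fin.last K ∧ arm t ω = i)).card := by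
      refine le_trans (Finset.card_le_card ?_) (Finset.card_union_le _ _)
      intro t ht
      rw [Finset.mem_filter] at ht
      obtain ⟨htI, harm⟩ := ht
      have hKt : K < t := by
        have := (Finset.mem_Icc.1 htI).1; omega
      have hd := hdite t ω hKt
      rw [Finset.mem_union, Finset.mem_filter, Finset.mem_filter]
      by_cases hcase : ((ξ t ω : ℕ) < K)
      · left
        refine ⟨htI, ?_⟩
        rw [dif_pos hcase] at hd
        have hval : (ξ t ω : ℕ) = (i : ℕ) :=
          congrArg Fin.val (hd.symm.trans harm)
        exact Fin.ext (by simpa using hval)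
      · right
        refine ⟨htI, ?_, harm⟩
        have hlt : (ξ t ω : ℕ) < K + 1 := (ξ t ω).isLt
        exact Fin.ext (by simp only [Fin.val_last]; omega)
    have hN : pullCount arm i T ω ≤ 1
        + ((Finset.Icc (K+1) T).filter (fun t => ξ t ω = Fin.castSucc i)).card
        + ((Finset.Icc (K+1) T).filter
            (fun t => ξ t ω = Fin.last K ∧ arm t ω = i)).card := by omega
    exact_mod_cast hN
  -- measurability of the events involved
  have hmeas2 : ∀ t : ℕ, MeasurableSet {ω : Ω | ξ t ω = Fin.castSucc i} :=
    fun t => (hξm t) (measurableSet_singleton _)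
  have hmeasK : ∀ t : ℕ, MeasurableSet {ω : Ω | ξ t ω = Fin.last K} :=
    fun t => (hξm t) (measurableSet_singleton _)
  have hmeas3 : ∀ t : ℕ, MeasurableSet {ω : Ω | ξ t ω = Fin.last K ∧ arm t ω = i} := by
    intro t
    have : {ω : Ω | ξ t ω = Fin.last K ∧ arm t ω = i}
        = {ω : Ω | ξ t ω = Fin.last K} ∩ {ω : Ω | arm t ω = i} := rfl
    rw [this]
    exact (hmeasK t).inter ((harmm t) (measurableSet_singleton _))
  have hmeas1 : ∀ t : ℕ, MeasurableSet {ω : Ω | arm t ω = i} :=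
    fun t => (harmm t) (measurableSet_singleton _)
  -- integrability
  have hint_pc : Integrable (fun ω => (pullCount arm i T ω : ℝ)) P :=
    integrable_count (Finset.Icc 1 T) (fun t ω => arm t ω = i) hmeas1
  have hint2 : Integrable (fun ω =>
      (((Finset.Icc (K+1) T).filter (fun t => ξ t ω = Fin.castSucc i)).card : ℝ)) P :=
    integrable_count _ _ hmeas2
  have hint3 : Integrable (fun ω =>
      (((Finset.Icc (K+1) T).filter
        (fun t => ξ t ω = Fin.last K ∧ arm t ω = i)).card : ℝ)) P :=
    integrable_count _ _ hmeas3
  have hintK : Integrable (fun ω =>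
      (((Finset.Icc (K+1) T).filter (fun t => ξ t ω = Fin.last K)).card : ℝ)) P :=
    integrable_count _ _ hmeasK
  -- integral of the exploration count
  have hI2 : ∫ ω, (((Finset.Icc (K+1) T).filter
      (fun t => ξ t ω = Fin.castSucc i)).card : ℝ) ∂P ≤ v * T := by
    rw [integral_count _ _ hmeas2]
    have hval : ∀ t ∈ Finset.Icc (K+1) T, (P {ω | ξ t ω = Fin.castSucc i}).toReal = v := by
      intro t ht
      have hKt : K < t := by have := (Finset.mem_Icc.1 ht).1; omega
      rw [hξdist t hKt (Fin.castSucc i), if_pos (by simpa using i.isLt)]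
      exact ENNReal.toReal_ofReal hv.le
    rw [Finset.sum_congr rfl hval, Finset.sum_const, Nat.card_Icc, nsmul_eq_mul]
    have hcard : ((T + 1 - (K+1) : ℕ) : ℝ) ≤ (T:ℝ) := by
      have : T + 1 - (K+1) ≤ T := by omega
      exact_mod_cast this
    calc ((T + 1 - (K+1) : ℕ) : ℝ) * v ≤ (T:ℝ) * v :=
          mul_le_mul_of_nonneg_right hcard hv.le
      _ = v * T := by ring
  -- integral of the UCB-branch count: first bound
  have hI3a : ∫ ω, (((Finset.Icc (K+1) T).filter
      (fun t => ξ t ω = Fin.last K ∧ arm t ω = i)).card : ℝ) ∂P ≤ (1 - (K:ℝ) * v) * T := by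
    have hptwise : ∀ ω, (((Finset.Icc (K+1) T).filter
        (fun t => ξ t ω = Fin.last K ∧ arm t ω = i)).card : ℝ)
        ≤ (((Finset.Icc (K+1) T).filter (fun t => ξ t ω = Fin.last K)).card : ℝ) := by
      intro ω
      have : ((Finset.Icc (K+1) T).filter (fun t => ξ t ω = Fin.last K ∧ arm t ω = i))
          ⊆ ((Finset.Icc (K+1) T).filter (fun t => ξ t ω = Fin.last K)) := by
        refine Finset.monotone_filter_right _ ?_
        intro t _ ht
        exact ht.1
      exact_mod_cast Finset.card_le_card this
    refine le_trans (integral_mono hint3 hintK hptwise) ?_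
    rw [integral_count _ _ hmeasK]
    have hval : ∀ t ∈ Finset.Icc (K+1) T,
        (P {ω | ξ t ω = Fin.last K}).toReal = 1 - (K:ℝ) * v := by
      intro t ht
      have hKt : K < t := by have := (Finset.mem_Icc.1 ht).1; omega
      rw [hξdist t hKt (Fin.last K), if_neg (by simp)]
      exact ENNReal.toReal_ofReal hKv0
    rw [Finset.sum_congr rfl hval, Finset.sum_const, Nat.card_Icc, nsmul_eq_mul]
    have hcard : ((T + 1 - (K+1) : ℕ) : ℝ) ≤ (T:ℝ) := by
      have : T + 1 - (K+1) ≤ T := by omega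
      exact_mod_cast this
    calc ((T + 1 - (K+1) : ℕ) : ℝ) * (1 - (K:ℝ) * v) ≤ (T:ℝ) * (1 - (K:ℝ) * v) :=
          mul_le_mul_of_nonneg_right hcard hKv0
      _ = (1 - (K:ℝ) * v) * T := by ring
  -- integral of the UCB-branch count: second bound
  have hI3b : ∫ ω, (((Finset.Icc (K+1) T).filter
      (fun t => ξ t ω = Fin.last K ∧ arm t ω = i)).card : ℝ) ∂P ≤ (u : ℝ) + 2 := by
    have hptwise : ∀ ω, (((Finset.Icc (K+1) T).filter
        (fun t => ξ t ω = Fin.last K ∧ arm t ω = i)).card : ℝ)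
        ≤ (u : ℝ) + Set.indicator Bad (fun _ => (T:ℝ)) ω := by
      intro ω
      by_cases hω : ω ∈ Bad
      · rw [Set.indicator_of_mem hω]
        have hcard : ((Finset.Icc (K+1) T).filter
            (fun t => ξ t ω = Fin.last K ∧ arm t ω = i)).card ≤ T := by
          calc _ ≤ (Finset.Icc (K+1) T).card := Finset.card_le_card (Finset.filter_subset _ _)
            _ = T + 1 - (K+1) := Nat.card_Icc _ _
            _ ≤ T := by omega
        have : (((Finset.Icc (K+1) T).filter
            (fun t => ξ t ω = Fin.last K ∧ arm t ω = i)).card : ℝ) ≤ (T:ℝ) := by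
          exact_mod_cast hcard
        have hu0 : (0:ℝ) ≤ u := Nat.cast_nonneg u
        linarith
      · rw [Set.indicator_of_notMem hω]
        have := hg3_good ω hω
        have : (((Finset.Icc (K+1) T).filter
            (fun t => ξ t ω = Fin.last K ∧ arm t ω = i)).card : ℝ) ≤ (u:ℝ) := by
          exact_mod_cast this
        linarith
    have hrhs_int : Integrable
        (fun ω => (u:ℝ) + Set.indicator Bad (fun _ => (T:ℝ)) ω) P :=
      (integrable_const _).add ((integrable_const _).indicator hBadm)
    refine le_trans (integral_mono hint3 hrhs_int hptwise) ?_
    rw [integral_add (integrable_const _) ((integrable_const _).indicator hBadm),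
      integral_const, integral_indicator_const _ hBadm]
    simp only [measure_univ, ENNReal.toReal_one, one_smul, smul_eq_mul, probReal_univ, measureReal_def]
    have := hPBad2
    linarith [mul_comm ((P Bad).toReal) ((T:ℝ))]
  -- put everything together
  have hmain : ∫ ω, (pullCount arm i T ω : ℝ) ∂P ≤ 1 + v * T
      + min ((u:ℝ) + 2) ((1 - (K:ℝ) * v) * T) := by
    have hrhs_int : Integrable (fun ω => 1
        + (((Finset.Icc (K+1) T).filter (fun t => ξ t ω = Fin.castSucc i)).card : ℝ)
        + (((Finset.Icc (K+1) T).filter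
            (fun t => ξ t ω = Fin.last K ∧ arm t ω = i)).card : ℝ)) P :=
      ((integrable_const _).add hint2).add hint3
    have hi12 : Integrable (fun ω => (1:ℝ)
        + (((Finset.Icc (K+1) T).filter (fun t => ξ t ω = Fin.castSucc i)).card : ℝ)) P := by
      exact (integrable_const _).add hint2
    have h1 := integral_mono hint_pc hrhs_int hsplit
    rw [integral_add hi12 hint3, integral_add (integrable_const _) hint2, integral_const] at h1
    simp only [measure_univ, ENNReal.toReal_one, one_smul, smul_eq_mul, probReal_univ] at h1
    have h3 := le_min hI3b hI3a
    linarith [hI2]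
  refine hmain.trans ?_
  have hu : (u:ℝ) ≤ 16 * Real.log T / Δ ^ 2 + 1 :=
    le_of_lt (Nat.ceil_lt_add_one (by positivity))
  have h1 : (u:ℝ) + 2 ≤ (16 * Real.log T / Δ ^ 2 + (1 - (K:ℝ) * v)) + 3 := by linarith
  have h2 : (1 - (K:ℝ) * v) * T ≤ (1 - (K:ℝ) * v) * T + 3 := by linarith
  have h3 := min_le_min h1 h2
  rw [min_add_add_right] at h3
  linarith
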